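/- In W = G(2,2,n) with 1 ≤ m ≤ ⌊n/2⌋, s_1 = (m̄, m+1 overlined), s_i = (i−1,i), for 1 ≤ i ≤ m and m+1 ≤ j ≤ n the negative reflection (ī, j̄) (sending e_i ↦ −e_j, e_j ↦ −e_i) equals the conjugate s_1^{s_{m+2} s_{m+3} ⋯ s_j · s_m s_{m−1} ⋯ s_{i+1}}, i.e., (ī,j̄) = (s_{m+2}⋯s_j s_m⋯s_{i+1})⁻¹ s_1 (s_{m+2}⋯s_j s_m⋯s_{i+1}). -/

import Mathlib

open Matrix BigOperators

/-- The reflection of `G(2,2,n)` exchanging `e_i` and `e_j` (1-based indices `i, j`)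
with sign `ε`: it sends `e_i ↦ ε • e_j`, `e_j ↦ ε • e_i` and fixes the other basis vectors. -/
def reflMat (n i j : ℕ) (ε : ℝ) : Matrix (Fin n) (Fin n) ℝ :=
  Matrix.of fun k l =>
    if ((k : ℕ) + 1 = i ∧ (l : ℕ) + 1 = j) ∨ ((k : ℕ) + 1 = j ∧ (l : ℕ) + 1 = i) then ε
    else if k = l ∧ (k : ℕ) + 1 ≠ i ∧ (k : ℕ) + 1 ≠ j then 1
    else 0

/-- The set of reflections of `G(2,2,n)`: the matrices `(i,j)` and `(ī,j̄)` for `1 ≤ i ≠ j ≤ n`. -/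
def ReflSet (n : ℕ) : Set (Matrix (Fin n) (Fin n) ℝ) :=
  {M | ∃ i j : ℕ, 1 ≤ i ∧ i < j ∧ j ≤ n ∧ (M = reflMat n i j 1 ∨ M = reflMat n i j (-1))}

/-- Reflection length: the minimal number of reflections whose product is `M`. -/
noncomputable def reflLen (n : ℕ) (M : Matrix (Fin n) (Fin n) ℝ) : ℕ :=
  sInf {k : ℕ | ∃ L : List (Matrix (Fin n) (Fin n) ℝ),
    L.length = k ∧ (∀ t ∈ L, t ∈ ReflSet n) ∧ L.prod = M}

/-- Membership in `W = G(2,2,n)`: monomial matrices with nonzero entries `±1` whose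
product is `1` (row `k` carries the entry `ε k` in column `σ k`). -/
def memD (n : ℕ) (M : Matrix (Fin n) (Fin n) ℝ) : Prop :=
  ∃ (σ : Equiv.Perm (Fin n)) (ε : Fin n → ℝ),
    (∀ i, ε i = 1 ∨ ε i = -1) ∧ (∏ i, ε i = 1) ∧
    ∀ k l, M k l = if σ k = l then ε k else 0

/-- Monomial matrix attached to a permutation and a sign function. -/
def mono {n : ℕ} (σ : Equiv.Perm (Fin n)) (f : Fin n → ℝ) : Matrix (Fin n) (Fin n) ℝ :=
  Matrix.of fun k l => if σ k = l then f k else 0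

lemma mono_mul {n : ℕ} (σ τ : Equiv.Perm (Fin n)) (f g : Fin n → ℝ) :
    mono σ f * mono τ g = mono (σ.trans τ) (fun k => f k * g (σ k)) := by
  ext k l
  simp only [mono, Matrix.mul_apply, Matrix.of_apply, Equiv.trans_apply]
  rw [Finset.sum_eq_single (σ k)]
  · simp [mul_ite]; congr
  · intro p _ hp; simp [Ne.symm hp]
  · simp

lemma reflMat_eq_mono (n a b : ℕ) (ha : 1 ≤ a) (hb : 1 ≤ b) (hab : a ≠ b)
    (han : a ≤ n) (hbn : b ≤ n) (ε : ℝ) :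
    reflMat n a b ε = mono (Equiv.swap ⟨a-1, by omega⟩ ⟨b-1, by omega⟩)
      (fun k => if k = (⟨a-1, by omega⟩ : Fin n) ∨ k = (⟨b-1, by omega⟩ : Fin n) then ε else 1) := by
  ext k l
  simp only [reflMat, mono, Matrix.of_apply, Equiv.swap_apply_def]
  have hk := k.isLt
  split_ifs <;> simp_all [Fin.ext_iff] <;> omega

lemma reflMat_symm (n a b : ℕ) (ε : ℝ) : reflMat n a b ε = reflMat n b a ε := by
  ext k l
  simp only [reflMat, Matrix.of_apply]
  split_ifs <;> tauto

lemma refl_sq (n a b : ℕ) (ha : 1 ≤ a) (hb : 1 ≤ b) (hab : a ≠ b)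
    (han : a ≤ n) (hbn : b ≤ n) :
    reflMat n a b 1 * reflMat n a b 1 = 1 := by
  rw [reflMat_eq_mono n a b ha hb hab han hbn, mono_mul]
  ext k l
  simp only [mono, Matrix.of_apply, Equiv.trans_apply, Equiv.swap_apply_self,
    Matrix.one_apply]
  split_ifs <;> simp_all

lemma refl_move (n x y z : ℕ) (hx1 : 1 ≤ x) (hy1 : 1 ≤ y) (hz1 : 1 ≤ z)
    (hxn : x ≤ n) (hyn : y ≤ n) (hzn : z ≤ n)
    (hxy : x ≠ y) (hxz : x ≠ z) (hyz : y ≠ z) (ε : ℝ) :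
    reflMat n y z 1 * reflMat n x y ε = reflMat n x z ε * reflMat n y z 1 := by
  rw [reflMat_eq_mono n y z hy1 hz1 hyz hyn hzn,
      reflMat_eq_mono n x y hx1 hy1 hxy hxn hyn,
      reflMat_eq_mono n x z hx1 hz1 hxz hxn hzn,
      mono_mul, mono_mul]
  set X : Fin n := ⟨x-1, by omega⟩ with hX
  set Y : Fin n := ⟨y-1, by omega⟩ with hY
  set Z : Fin n := ⟨z-1, by omega⟩ with hZ
  have h1 : X ≠ Y := by simp [hX, hY, Fin.ext_iff]; omega
  have h2 : X ≠ Z := by simp [hX, hZ, Fin.ext_iff]; omega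
  have h3 : Y ≠ Z := by simp [hY, hZ, Fin.ext_iff]; omega
  clear_value X Y Z
  clear hX hY hZ
  have h1' := Ne.symm h1
  have h2' := Ne.symm h2
  have h3' := Ne.symm h3
  congr 1
  · ext k
    simp only [Equiv.trans_apply, Equiv.swap_apply_def]
    split_ifs <;> simp_all
  · funext k
    simp only [Equiv.swap_apply_def]
    split_ifs <;> simp_all

/-- Moving the second index up by conjugation. -/
lemma A_comm (n m : ℕ) (hm : 1 ≤ m) :
    ∀ d, m + 1 + d ≤ n →
    ((List.range d).map (fun k => reflMat n (m + 1 + k) (m + 2 + k) 1)).prod *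
        reflMat n m (m + 1 + d) (-1)
      = reflMat n m (m + 1) (-1) *
        ((List.range d).map (fun k => reflMat n (m + 1 + k) (m + 2 + k) 1)).prod := by
  intro d
  induction d with
  | zero => simp
  | succ d ih =>
    intro hd
    rw [List.range_succ, List.map_append, List.prod_append]
    simp only [List.map_cons, List.map_nil, List.prod_cons, List.prod_nil, mul_one]
    have key : reflMat n (m + 1 + d) (m + 2 + d) 1 * reflMat n m (m + 1 + (d+1)) (-1)
        = reflMat n m (m + 1 + d) (-1) * reflMat n (m + 1 + d) (m + 2 + d) 1 := by
      have h := refl_move n m (m + 2 + d) (m + 1 + d) (by omega) (by omega) (by omega)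
        (by omega) (by omega) (by omega) (by omega) (by omega) (by omega) (-1)
      rw [reflMat_symm n (m+2+d) (m+1+d)] at h
      have he : m + 1 + (d + 1) = m + 2 + d := by omega
      rw [he]
      exact h
    calc (((List.range d).map (fun k => reflMat n (m + 1 + k) (m + 2 + k) 1)).prod *
            reflMat n (m + 1 + d) (m + 2 + d) 1) * reflMat n m (m + 1 + (d+1)) (-1)
        = ((List.range d).map (fun k => reflMat n (m + 1 + k) (m + 2 + k) 1)).prod *
            (reflMat n m (m + 1 + d) (-1) * reflMat n (m + 1 + d) (m + 2 + d) 1) := by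
          rw [mul_assoc, key]
      _ = reflMat n m (m + 1) (-1) *
            (((List.range d).map (fun k => reflMat n (m + 1 + k) (m + 2 + k) 1)).prod *
              reflMat n (m + 1 + d) (m + 2 + d) 1) := by
          rw [← mul_assoc, ih (by omega), mul_assoc]

/-- Moving the first index down by conjugation. -/
lemma B_comm (n m j : ℕ) (hm : 1 ≤ m) (hj : m < j) (hjn : j ≤ n) :
    ∀ d, d ≤ m - 1 →
    ((List.range d).map (fun k => reflMat n (m - 1 - k) (m - k) 1)).prod *
        reflMat n (m - d) j (-1)
      = reflMat n m j (-1) *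
        ((List.range d).map (fun k => reflMat n (m - 1 - k) (m - k) 1)).prod := by
  intro d
  induction d with
  | zero => simp
  | succ d ih =>
    intro hd
    rw [List.range_succ, List.map_append, List.prod_append]
    simp only [List.map_cons, List.map_nil, List.prod_cons, List.prod_nil, mul_one]
    have key : reflMat n (m - 1 - d) (m - d) 1 * reflMat n (m - (d+1)) j (-1)
        = reflMat n (m - d) j (-1) * reflMat n (m - 1 - d) (m - d) 1 := by
      have h := refl_move n j (m - 1 - d) (m - d) (by omega) (by omega) (by omega)
        (by omega) (by omega) (by omega) (by omega) (by omega) (by omega) (-1)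
      rw [reflMat_symm n j (m - 1 - d), reflMat_symm n j (m - d)] at h
      have he : m - (d + 1) = m - 1 - d := by omega
      rw [he]
      exact h
    calc (((List.range d).map (fun k => reflMat n (m - 1 - k) (m - k) 1)).prod *
            reflMat n (m - 1 - d) (m - d) 1) * reflMat n (m - (d+1)) j (-1)
        = ((List.range d).map (fun k => reflMat n (m - 1 - k) (m - k) 1)).prod *
            (reflMat n (m - d) j (-1) * reflMat n (m - 1 - d) (m - d) 1) := by
          rw [mul_assoc, key]
      _ = reflMat n m j (-1) *
            (((List.range d).map (fun k => reflMat n (m - 1 - k) (m - k) 1)).prod *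
              reflMat n (m - 1 - d) (m - d) 1) := by
          rw [← mul_assoc, ih (by omega), mul_assoc]

lemma isUnit_listProd {n : ℕ} {L : List (Matrix (Fin n) (Fin n) ℝ)}
    (h : ∀ t ∈ L, IsUnit t) : IsUnit L.prod := by
  induction L with
  | nil => simp
  | cons a L ih =>
    rw [List.prod_cons]
    exact (h a (by simp)).mul (ih fun t ht => h t (List.mem_cons_of_mem a ht))

/-- With `s_1 = (m̄, m+1‾)` and `s_i = (i-1, i)`, for `1 ≤ i ≤ m` and `m+1 ≤ j ≤ n`
the negative reflection `(ī, j̄)` equals the conjugate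
`(s_{m+2} ⋯ s_j · s_m ⋯ s_{i+1})⁻¹ · s_1 · (s_{m+2} ⋯ s_j · s_m ⋯ s_{i+1})`. -/
theorem negative_reflection_eq_conjugate_of_s1 (n m i j : ℕ)
    (hn : 4 ≤ n) (hm : 1 ≤ m) (hm2 : m ≤ n / 2)
    (hi : 1 ≤ i) (him : i ≤ m) (hj : m + 1 ≤ j) (hjn : j ≤ n) :
    reflMat n i j (-1) =
      ((((List.range (j - (m + 1))).map (fun k => reflMat n (m + 1 + k) (m + 2 + k) 1)).prod) *
        (((List.range (m - i)).map (fun k => reflMat n (m - 1 - k) (m - k) 1)).prod))⁻¹ *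
      reflMat n m (m + 1) (-1) *
      ((((List.range (j - (m + 1))).map (fun k => reflMat n (m + 1 + k) (m + 2 + k) 1)).prod) *
        (((List.range (m - i)).map (fun k => reflMat n (m - 1 - k) (m - k) 1)).prod)) := by
  set A := ((List.range (j - (m + 1))).map (fun k => reflMat n (m + 1 + k) (m + 2 + k) 1)).prod with hAdef
  set B := ((List.range (m - i)).map (fun k => reflMat n (m - 1 - k) (m - k) 1)).prod with hBdef
  have hA : A * reflMat n m j (-1) = reflMat n m (m + 1) (-1) * A := by
    have := A_comm n m hm (j - (m + 1)) (by omega)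
    rwa [show m + 1 + (j - (m + 1)) = j by omega] at this
  have hB : B * reflMat n i j (-1) = reflMat n m j (-1) * B := by
    have := B_comm n m j hm (by omega) hjn (m - i) (by omega)
    rwa [show m - (m - i) = i by omega] at this
  have hP : (A * B) * reflMat n i j (-1) = reflMat n m (m + 1) (-1) * (A * B) := by
    rw [mul_assoc, hB, ← mul_assoc, hA, mul_assoc]
  have hAu : IsUnit A := by
    apply isUnit_listProd
    intro t ht
    rw [List.mem_map] at ht
    obtain ⟨k, hk, rfl⟩ := ht
    rw [List.mem_range] at hk
    have h1 := refl_sq n (m+1+k) (m+2+k) (by omega) (by omega) (by omega) (by omega) (by omega)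
    exact ⟨⟨_, _, h1, h1⟩, rfl⟩
  have hBu : IsUnit B := by
    apply isUnit_listProd
    intro t ht
    rw [List.mem_map] at ht
    obtain ⟨k, hk, rfl⟩ := ht
    rw [List.mem_range] at hk
    have h1 := refl_sq n (m-1-k) (m-k) (by omega) (by omega) (by omega) (by omega) (by omega)
    exact ⟨⟨_, _, h1, h1⟩, rfl⟩
  have hPu : IsUnit (A * B).det := by
    rw [← Matrix.isUnit_iff_isUnit_det]
    exact hAu.mul hBu
  rw [mul_assoc, ← hP, ← mul_assoc, Matrix.nonsing_inv_mul _ hPu, one_mul]
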